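/- arXiv:0803.1067 — 2 statements merged into one kernel-verified Lean document; each statement's English description precedes it below -/
import Mathlib

section
/- For α > 0, k a positive integer, λ > 0, and 0 ≤ x̄ ≤ t (set x* = t − x̄): ∫_{x̄}^{t} e^{-λs} (s − x̄)^{kα−1} Γ(α, λ(t − s)) ds = Γ(kα) Γ(α) e^{-λ x̄} λ^{-kα} [P(kα, λ x*) − P(kα + α, λ x*)], where Γ(·,·) is the upper incomplete gamma function and P the regularized lower incomplete gamma function. -/
open Real

/-- Regularized lower incomplete gamma function `P(a,u)`. -/
noncomputable def regGamma (a u : ℝ) : ℝ :=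
  (1 / Real.Gamma a) * ∫ t in (0 : ℝ)..u, t ^ (a - 1) * Real.exp (-t)

/-- Upper incomplete gamma function `Γ(a,u)`. -/
noncomputable def upperGamma (a u : ℝ) : ℝ :=
  ∫ s in Set.Ioi u, s ^ (a - 1) * Real.exp (-s)

open MeasureTheory Set intervalIntegral

noncomputable def lg (b u : ℝ) : ℝ := ∫ t in (0:ℝ)..u, t ^ (b - 1) * Real.exp (-t)

noncomputable def Bint (a b : ℝ) : ℝ := ∫ x in (0:ℝ)..1, x ^ (a - 1) * (1 - x) ^ (b - 1)

noncomputable def gb (b x : ℝ) : ℝ := if 0 < x then x ^ (b - 1) else 0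

noncomputable def Hf (a b v u : ℝ) : ℝ := v ^ (a - 1) * gb b (u - v) * Real.exp (-u)

lemma gb_measurable (b : ℝ) : Measurable (gb b) := by
  unfold gb
  exact Measurable.ite measurableSet_Ioi (measurable_id.pow_const _) measurable_const

lemma gb_nonneg (b x : ℝ) : 0 ≤ gb b x := by
  unfold gb
  split
  · exact Real.rpow_nonneg (le_of_lt ‹_›) _
  · exact le_rfl

lemma Hf_nonneg {a b v : ℝ} (hv : 0 ≤ v) (u : ℝ) : 0 ≤ Hf a b v u :=
  mul_nonneg (mul_nonneg (Real.rpow_nonneg hv _) (gb_nonneg _ _)) (Real.exp_nonneg _)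

lemma Hf_measurable (a b : ℝ) : Measurable (Function.uncurry (Hf a b)) := by
  apply Measurable.mul
  apply Measurable.mul
  · exact measurable_fst.pow_const _
  · exact (gb_measurable b).comp (measurable_snd.sub measurable_fst)
  · exact (measurable_snd.neg).exp

lemma gamma_integrand_integrableOn {b : ℝ} (hb : 0 < b) :
    IntegrableOn (fun t : ℝ => t ^ (b - 1) * Real.exp (-t)) (Ioi 0) := by
  have := Real.GammaIntegral_convergent hb
  exact this.congr_fun (fun x _ => by ring) measurableSet_Ioi

lemma gamma_integrand_ii {b : ℝ} (hb : 0 < b) {u v : ℝ} (hu : 0 ≤ u) (hv : 0 ≤ v) :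
    IntervalIntegrable (fun t : ℝ => t ^ (b - 1) * Real.exp (-t)) volume u v := by
  rw [intervalIntegrable_iff]
  refine (gamma_integrand_integrableOn hb).mono_set (fun x hx => ?_)
  exact mem_Ioi.mpr (lt_of_le_of_lt (le_min hu hv) hx.1)

lemma beta_integrand_ii {a b : ℝ} (ha : 0 < a) (hb : 0 < b) :
    IntervalIntegrable (fun x : ℝ => x ^ (a - 1) * (1 - x) ^ (b - 1)) volume 0 1 := by
  have h := Complex.betaIntegral_convergent (u := a) (v := b) (by simpa using ha)
    (by simpa using hb)
  have h2 : IntervalIntegrable (fun x : ℝ =>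
      ‖((x : ℂ) ^ ((a:ℂ) - 1) * (1 - (x:ℂ)) ^ ((b:ℂ) - 1))‖) volume 0 1 := h.norm
  refine h2.congr_ae ?_
  rw [Filter.EventuallyEq, ae_restrict_iff' measurableSet_uIoc]
  filter_upwards with x
  intro hx
  rw [uIoc_of_le zero_le_one] at hx
  have hx0 : (0:ℝ) ≤ x := le_of_lt hx.1
  have hx1 : (0:ℝ) ≤ 1 - x := by linarith [hx.2]
  have e1 : ((x:ℂ) ^ ((a:ℂ) - 1)) = ((x ^ (a-1) : ℝ) : ℂ) := by
    rw [show ((a:ℂ)-1) = ((a-1:ℝ):ℂ) by push_cast; ring, Complex.ofReal_cpow hx0]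
  have e2 : ((1 - (x:ℂ)) ^ ((b:ℂ) - 1)) = (((1-x) ^ (b-1) : ℝ) : ℂ) := by
    rw [show ((b:ℂ)-1) = ((b-1:ℝ):ℂ) by push_cast; ring,
      show (1 - (x:ℂ)) = ((1-x:ℝ):ℂ) by push_cast; ring, Complex.ofReal_cpow hx1]
  rw [e1, e2, ← Complex.ofReal_mul, Complex.norm_real, Real.norm_eq_abs, abs_of_nonneg]
  exact mul_nonneg (Real.rpow_nonneg hx0 _) (Real.rpow_nonneg hx1 _)

lemma beta_scaled_ii {a b u : ℝ} (ha : 0 < a) (hb : 0 < b) (hu : 0 < u) :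
    IntervalIntegrable (fun v : ℝ => v ^ (a - 1) * (u - v) ^ (b - 1)) volume 0 u := by
  have h := (beta_integrand_ii ha hb).comp_mul_right (c := u⁻¹)
  rw [zero_div, one_div, inv_inv] at h
  have h2 := h.const_mul (u ^ (a + b - 2))
  refine h2.congr_ae ?_
  rw [Filter.EventuallyEq, ae_restrict_iff' measurableSet_uIoc]
  filter_upwards with v
  intro hv
  rw [uIoc_of_le hu.le] at hv
  have hv0 : (0:ℝ) ≤ v := hv.1.le
  have hvu : v ≤ u := hv.2
  show u ^ (a + b - 2) * ((v * u⁻¹) ^ (a - 1) * (1 - v * u⁻¹) ^ (b - 1))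
      = v ^ (a - 1) * (u - v) ^ (b - 1)
  have e0 : v * u⁻¹ = v / u := by ring
  have e1 : (v / u) ^ (a - 1) = v ^ (a-1) / u ^ (a-1) := Real.div_rpow hv0 hu.le _
  have e2 : (1 - v / u) = (u - v) / u := by field_simp
  have e3 : ((u - v)/u) ^ (b - 1) = (u-v) ^ (b-1) / u ^ (b-1) :=
    Real.div_rpow (by linarith : (0:ℝ) ≤ u - v) hu.le _
  rw [e0, e1, e2, e3, show a + b - 2 = (a-1) + (b-1) by ring, Real.rpow_add hu]
  field_simp



lemma lg_eq_setIntegral {b u : ℝ} (hu : 0 ≤ u) :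
    lg b u = ∫ t in Ioc 0 u, t ^ (b - 1) * Real.exp (-t) := by
  rw [lg, intervalIntegral.integral_of_le hu]

lemma upperGamma_eq {b u : ℝ} (hb : 0 < b) (hu : 0 ≤ u) :
    upperGamma b u = Real.Gamma b - lg b u := by
  rw [upperGamma]
  have hsplit : Ioc 0 u ∪ Ioi u = Ioi 0 := Ioc_union_Ioi_eq_Ioi hu
  have h1 : Real.Gamma b = ∫ t in Ioi 0, t ^ (b - 1) * Real.exp (-t) := by
    rw [Real.Gamma_eq_integral hb]
    exact setIntegral_congr_fun measurableSet_Ioi (fun x _ => by ring)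
  have h2 := setIntegral_union (Ioc_disjoint_Ioi le_rfl) measurableSet_Ioi
    ((gamma_integrand_integrableOn hb).mono_set (by rw [← hsplit]; exact subset_union_left))
    ((gamma_integrand_integrableOn hb).mono_set (by rw [← hsplit]; exact subset_union_right))
    (f := fun t : ℝ => t ^ (b - 1) * Real.exp (-t)) (μ := volume)
  rw [hsplit] at h2
  rw [lg_eq_setIntegral hu, h1, h2]; ring

lemma lg_nonneg {b u : ℝ} (hu : 0 ≤ u) : 0 ≤ lg b u := by
  apply intervalIntegral.integral_nonneg hu
  intro x hx
  exact mul_nonneg (Real.rpow_nonneg hx.1 _) (Real.exp_nonneg _)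

lemma lg_mono {b : ℝ} (hb : 0 < b) {u v : ℝ} (hu : 0 ≤ u) (huv : u ≤ v) :
    lg b u ≤ lg b v := by
  have h := intervalIntegral.integral_add_adjacent_intervals
    (gamma_integrand_ii hb le_rfl hu) (gamma_integrand_ii hb hu (hu.trans huv))
  have h2 : 0 ≤ ∫ t in u..v, t ^ (b - 1) * Real.exp (-t) :=
    intervalIntegral.integral_nonneg huv (fun x hx =>
      mul_nonneg (Real.rpow_nonneg (hu.trans hx.1) _) (Real.exp_nonneg _))
  unfold lg; linarith [h]

lemma lg_le_Gamma {b : ℝ} (hb : 0 < b) {u : ℝ} (hu : 0 ≤ u) : lg b u ≤ Real.Gamma b := by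
  have h := upperGamma_eq hb hu
  rw [upperGamma] at h
  have h2 : 0 ≤ ∫ s in Set.Ioi u, s ^ (b - 1) * Real.exp (-s) := by
    apply setIntegral_nonneg measurableSet_Ioi
    intro x hx
    exact mul_nonneg (Real.rpow_nonneg (hu.trans (le_of_lt hx)) _) (Real.exp_nonneg _)
  linarith



lemma betaIntegral_ofReal {a b : ℝ} :
    Complex.betaIntegral a b = (Bint a b : ℂ) := by
  rw [Complex.betaIntegral, Bint, ← intervalIntegral.integral_ofReal]
  apply intervalIntegral.integral_congr
  intro x hx
  rw [uIcc_of_le zero_le_one] at hx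
  simp only
  rw [show ((a:ℂ)-1) = ((a-1:ℝ):ℂ) by push_cast; ring,
    show ((b:ℂ)-1) = ((b-1:ℝ):ℂ) by push_cast; ring,
    show (1 - (x:ℂ)) = ((1-x:ℝ):ℂ) by push_cast; ring,
    ← Complex.ofReal_cpow hx.1, ← Complex.ofReal_cpow (by linarith [hx.2] : (0:ℝ) ≤ 1 - x),
    ← Complex.ofReal_mul]

lemma Gamma_mul_Gamma_real {a b : ℝ} (ha : 0 < a) (hb : 0 < b) :
    Real.Gamma a * Real.Gamma b = Real.Gamma (a + b) * Bint a b := by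
  have := Complex.Gamma_mul_Gamma_eq_betaIntegral (s := a) (t := b)
    (by simpa using ha) (by simpa using hb)
  rw [betaIntegral_ofReal] at this
  have h2 : ((a : ℂ) + b) = ((a + b : ℝ) : ℂ) := by push_cast; ring
  rw [h2, Complex.Gamma_ofReal, Complex.Gamma_ofReal, Complex.Gamma_ofReal] at this
  exact_mod_cast this

lemma beta_integrand_integrableOn {a b : ℝ} (ha : 0 < a) (hb : 0 < b) :
    IntervalIntegrable (fun x : ℝ => x ^ (a - 1) * (1 - x) ^ (b - 1)) volume 0 1 := by
  have h := Complex.betaIntegral_convergent (u := a) (v := b) (by simpa using ha) (by simpa using hb)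
  have h2 : IntervalIntegrable (fun x : ℝ =>
      ‖((x : ℂ) ^ ((a:ℂ) - 1) * (1 - (x:ℂ)) ^ ((b:ℂ) - 1))‖) volume 0 1 := h.norm
  refine h2.congr_ae ?_
  rw [Filter.EventuallyEq, ae_restrict_iff' measurableSet_uIoc]
  filter_upwards with x
  intro hx
  rw [uIoc_of_le zero_le_one] at hx
  have hx0 : (0:ℝ) ≤ x := le_of_lt hx.1
  have hx1 : (0:ℝ) ≤ 1 - x := by linarith [hx.2]
  have e1 : ((x:ℂ) ^ ((a:ℂ) - 1)) = ((x ^ (a-1) : ℝ) : ℂ) := by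
    rw [Complex.ofReal_cpow hx0]; push_cast; ring_nf
  have e2 : ((1 - (x:ℂ)) ^ ((b:ℂ) - 1)) = (((1-x) ^ (b-1) : ℝ) : ℂ) := by
    rw [← Complex.ofReal_one, ← Complex.ofReal_sub, Complex.ofReal_cpow hx1]; push_cast; ring_nf
  rw [e1, e2, ← Complex.ofReal_mul, Complex.norm_real, Real.norm_eq_abs, abs_of_nonneg]
  exact mul_nonneg (Real.rpow_nonneg hx0 _) (Real.rpow_nonneg hx1 _)



lemma beta_scaled {a b u : ℝ} (hu : 0 < u) :
    ∫ v in (0:ℝ)..u, v ^ (a - 1) * (u - v) ^ (b - 1) = u ^ (a + b - 1) * Bint a b := by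
  have h := intervalIntegral.integral_comp_mul_left
    (fun v : ℝ => v ^ (a - 1) * (u - v) ^ (b - 1)) (ne_of_gt hu) (a := 0) (b := 1)
  rw [mul_zero, mul_one] at h
  have h' := (inv_smul_eq_iff₀ (ne_of_gt hu)).mp h.symm
  rw [h', smul_eq_mul, ← intervalIntegral.integral_const_mul, Bint,
    ← intervalIntegral.integral_const_mul]
  apply intervalIntegral.integral_congr
  intro x hx
  rw [uIcc_of_le zero_le_one] at hx
  have h1 : u * x ≥ 0 := mul_nonneg hu.le hx.1
  have h2 : u - u * x = u * (1 - x) := by ring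
  simp only
  rw [h2, Real.mul_rpow hu.le hx.1, Real.mul_rpow hu.le (by linarith [hx.2] : (0:ℝ) ≤ 1 - x),
    show a + b - 1 = 1 + ((a-1) + (b-1)) by ring, Real.rpow_add hu, Real.rpow_add hu,
    Real.rpow_one]
  ring

lemma Bint_nonneg (a b : ℝ) : 0 ≤ Bint a b := by
  apply intervalIntegral.integral_nonneg zero_le_one
  intro x hx
  exact mul_nonneg (Real.rpow_nonneg hx.1 _) (Real.rpow_nonneg (by linarith [hx.2]) _)

lemma ae_ne_vol (u : ℝ) : ∀ᵐ v : ℝ, v ≠ u := by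
  rw [ae_iff]
  simpa using measure_singleton u

-- Step B : integrability of `Hf a b v ·` on `Ioc 0 w` for `v ∈ Ioc 0 w`
lemma stepB {a b w : ℝ} (hb : 0 < b) {v : ℝ} (hv : v ∈ Ioc 0 w) :
    IntegrableOn (Hf a b v) (Ioc 0 w) volume := by
  have hsplit : Ioc 0 v ∪ Ioc v w = Ioc 0 w := Ioc_union_Ioc_eq_Ioc hv.1.le hv.2
  rw [← hsplit]
  apply IntegrableOn.union
  · -- zero on Ioc 0 v
    refine (integrableOn_zero (ε' := ℝ)).congr_fun (fun u hu => ?_) measurableSet_Ioc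
    have : ¬ (0 < u - v) := by simp; linarith [hu.2]
    simp [Hf, gb, this]
  · -- shifted gamma integrand on Ioc v w
    have h1 : IntervalIntegrable (fun u : ℝ => (u - v) ^ (b-1) * Real.exp (-(u - v)))
        volume v w := by
      have := (gamma_integrand_ii hb le_rfl (by linarith [hv.2] : (0:ℝ) ≤ w - v)).comp_sub_right v
      simpa using this
    refine (intervalIntegrable_iff_integrableOn_Ioc_of_le hv.2).mp
        ((h1.const_mul (v ^ (a-1) * Real.exp (-v))).congr_ae ?_)
    rw [Filter.EventuallyEq, ae_restrict_iff' measurableSet_uIoc]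
    filter_upwards with u hu
    rw [uIoc_of_le hv.2] at hu
    have huv : 0 < u - v := by linarith [hu.1]
    simp only [Hf, gb, if_pos huv]
    rw [show (-u : ℝ) = -v + -(u - v) by ring, Real.exp_add]
    ring

-- Step A : the inner representation
lemma stepA {a b w : ℝ} (hb : 0 < b) {v : ℝ} (hv : v ∈ Ioc 0 w) :
    v ^ (a-1) * Real.exp (-v) * lg b (w - v) = ∫ u in Ioc 0 w, Hf a b v u := by
  have hvw : v ≤ w := hv.2
  have hwv : 0 ≤ w - v := by linarith
  -- substitution in lg
  have h1 : lg b (w - v) = ∫ u in v..w, (u - v) ^ (b-1) * Real.exp (-(u - v)) := by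
    rw [lg]
    have := intervalIntegral.integral_comp_sub_right
      (fun s : ℝ => s ^ (b-1) * Real.exp (-s)) v (a := v) (b := w)
    simpa using this.symm
  have h2 : v ^ (a-1) * Real.exp (-v) * lg b (w - v) = ∫ u in Ioc v w, Hf a b v u := by
    rw [h1, intervalIntegral.integral_of_le hvw, ← MeasureTheory.integral_const_mul]
    apply setIntegral_congr_ae measurableSet_Ioc
    filter_upwards with u hu
    have huv : 0 < u - v := by linarith [hu.1]
    simp only [Hf, gb, if_pos huv]
    rw [show (-u : ℝ) = -v + -(u - v) by ring, Real.exp_add]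
    ring
  rw [h2]
  symm
  apply setIntegral_eq_of_subset_of_forall_diff_eq_zero measurableSet_Ioc
    (Ioc_subset_Ioc_left hv.1.le)
  intro u hu
  have : ¬ (0 < u - v) := by
    simp only [not_lt, sub_nonpos]
    rcases hu with ⟨hu1, hu2⟩
    simp only [mem_Ioc, not_and_or, not_lt, not_le] at hu2
    rcases hu2 with h | h
    · exact h
    · exact absurd hu1.2 (not_le.mpr h)
  simp [Hf, gb, this]

-- Step E : inner lintegral over v
lemma stepE {a b w : ℝ} (ha : 0 < a) (hb : 0 < b) {u : ℝ} (hu : u ∈ Ioc 0 w) :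
    ∫⁻ v in Ioc 0 w, ENNReal.ofReal (Hf a b v u) =
      ENNReal.ofReal (u ^ (a + b - 1) * Bint a b * Real.exp (-u)) := by
  have hu0 : 0 < u := hu.1
  have huw : u ≤ w := hu.2
  have hsplit : Ioc 0 u ∪ Ioc u w = Ioc 0 w := Ioc_union_Ioc_eq_Ioc hu0.le huw
  rw [← hsplit, lintegral_union measurableSet_Ioc (Ioc_disjoint_Ioc_of_le le_rfl)]
  have hzero : ∫⁻ v in Ioc u w, ENNReal.ofReal (Hf a b v u) = 0 := by
    rw [setLIntegral_congr_fun measurableSet_Ioc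
      (fun v hv => ?_), lintegral_zero]
    have : ¬ (0 < u - v) := by simp only [not_lt, sub_nonpos]; exact hv.1.le
    simp [Hf, gb, this]
  rw [hzero, add_zero]
  -- integrability of v ↦ Hf a b v u on Ioc 0 u
  have hii : IntegrableOn (fun v => Hf a b v u) (Ioc 0 u) volume := by
    refine ((intervalIntegrable_iff_integrableOn_Ioc_of_le hu0.le).mp
      ((beta_scaled_ii ha hb hu0).mul_const (Real.exp (-u)))).congr_fun_ae ?_
    rw [Filter.EventuallyEq, ae_restrict_iff' measurableSet_Ioc]
    filter_upwards [ae_ne_vol u] with v hvne hv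
    have huv : 0 < u - v := lt_of_le_of_ne (by linarith [hv.2]) (by intro h; exact hvne (by linarith))
    simp only [Hf, gb, if_pos huv]
  rw [← ofReal_integral_eq_lintegral_ofReal hii]
  · congr 1
    have h1 : ∫ v in Ioc 0 u, Hf a b v u =
        ∫ v in Ioc 0 u, (v ^ (a-1) * (u - v) ^ (b-1)) * Real.exp (-u) := by
      apply setIntegral_congr_ae measurableSet_Ioc
      filter_upwards [ae_ne_vol u] with v hvne hv
      have huv : 0 < u - v := lt_of_le_of_ne (by linarith [hv.2])
        (by intro h; exact hvne (by linarith))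
      simp only [Hf, gb, if_pos huv]
    rw [h1, MeasureTheory.integral_mul_const, ← intervalIntegral.integral_of_le hu0.le,
      beta_scaled hu0]
  · exact (ae_restrict_iff' measurableSet_Ioc).mpr
      (ae_of_all _ fun v hv => Hf_nonneg hv.1.le u)

lemma conv_eq {a b w : ℝ} (ha : 0 < a) (hb : 0 < b) (hw : 0 ≤ w) :
    ∫ v in (0:ℝ)..w, v ^ (a-1) * Real.exp (-v) * lg b (w - v) = Bint a b * lg (a+b) w := by
  rw [intervalIntegral.integral_of_le hw]
  have hm : Measurable (fun x : ℝ => lg b (max x 0)) :=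
    Monotone.measurable (fun x y hxy => lg_mono hb (le_max_right _ _) (max_le_max hxy le_rfl))
  set ψ : ℝ → ℝ := fun v => v ^ (a-1) * Real.exp (-v) * lg b (max (w - v) 0) with hψ
  have hψmeas : Measurable ψ :=
    ((measurable_id.pow_const _).mul (measurable_id.neg.exp)).mul
      (hm.comp (measurable_const.sub measurable_id))
  have hcongr : (∫ v in Ioc 0 w, v ^ (a-1) * Real.exp (-v) * lg b (w - v)) =
      ∫ v in Ioc 0 w, ψ v := by
    apply setIntegral_congr_fun measurableSet_Ioc
    intro v hv
    have : max (w - v) 0 = w - v := max_eq_left (by linarith [hv.2])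
    rw [hψ]; simp only [this]
  rw [hcongr]
  have hψnn : 0 ≤ᵐ[volume.restrict (Ioc 0 w)] ψ := by
    refine (ae_restrict_iff' measurableSet_Ioc).mpr (ae_of_all _ fun v hv => ?_)
    exact mul_nonneg (mul_nonneg (Real.rpow_nonneg hv.1.le _) (Real.exp_nonneg _))
      (lg_nonneg (le_max_right _ _))
  rw [integral_eq_lintegral_of_nonneg_ae hψnn hψmeas.aestronglyMeasurable]
  have eq2 : (∫⁻ v in Ioc 0 w, ENNReal.ofReal (ψ v)) =
      ∫⁻ v in Ioc 0 w, ∫⁻ u in Ioc 0 w, ENNReal.ofReal (Hf a b v u) := by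
    apply lintegral_congr_ae
    refine (ae_restrict_iff' measurableSet_Ioc).mpr (ae_of_all _ fun v hv => ?_)
    have h1 : ψ v = ∫ u in Ioc 0 w, Hf a b v u := by
      rw [hψ]
      simp only [max_eq_left (by linarith [hv.2] : (0:ℝ) ≤ w - v)]
      exact stepA hb hv
    show ENNReal.ofReal (ψ v) = _
    rw [h1]
    exact ofReal_integral_eq_lintegral_ofReal (stepB hb hv)
      ((ae_restrict_iff' measurableSet_Ioc).mpr (ae_of_all _ fun u _ => Hf_nonneg hv.1.le u))
  rw [eq2]
  have eq3 : (∫⁻ v in Ioc 0 w, ∫⁻ u in Ioc 0 w, ENNReal.ofReal (Hf a b v u)) =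
      ∫⁻ u in Ioc 0 w, ∫⁻ v in Ioc 0 w, ENNReal.ofReal (Hf a b v u) :=
    lintegral_lintegral_swap (((Hf_measurable a b).ennreal_ofReal).aemeasurable)
  rw [eq3]
  have eq4 : (∫⁻ u in Ioc 0 w, ∫⁻ v in Ioc 0 w, ENNReal.ofReal (Hf a b v u)) =
      ∫⁻ u in Ioc 0 w, ENNReal.ofReal (u ^ (a + b - 1) * Bint a b * Real.exp (-u)) := by
    apply lintegral_congr_ae
    exact (ae_restrict_iff' measurableSet_Ioc).mpr (ae_of_all _ fun u hu => stepE ha hb hu)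
  rw [eq4]
  have hint : IntegrableOn (fun u : ℝ => u ^ (a + b - 1) * Bint a b * Real.exp (-u))
      (Ioc 0 w) volume := by
    have base : IntegrableOn (fun x : ℝ => x ^ (a + b - 1) * Real.exp (-x) * Bint a b)
        (Ioc 0 w) volume :=
      ((gamma_integrand_integrableOn (by linarith : (0:ℝ) < a + b)).mono_set
        Ioc_subset_Ioi_self).mul_const (Bint a b)
    exact base.congr_fun (fun x _ => by ring) measurableSet_Ioc
  rw [← ofReal_integral_eq_lintegral_ofReal hint]
  · have : (∫ u in Ioc 0 w, u ^ (a + b - 1) * Bint a b * Real.exp (-u)) =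
        Bint a b * lg (a+b) w := by
      rw [lg_eq_setIntegral hw, ← MeasureTheory.integral_const_mul]
      apply setIntegral_congr_fun measurableSet_Ioc
      intro u hu
      ring
    rw [this, ENNReal.toReal_ofReal]
    exact mul_nonneg (Bint_nonneg a b) (lg_nonneg hw)
  · refine (ae_restrict_iff' measurableSet_Ioc).mpr (ae_of_all _ fun u hu => ?_)
    exact mul_nonneg (mul_nonneg (Real.rpow_nonneg hu.1.le _) (Bint_nonneg a b))
      (Real.exp_nonneg _)

lemma J_eq {a b w : ℝ} (ha : 0 < a) (hb : 0 < b) (hw : 0 ≤ w) :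
    ∫ v in (0:ℝ)..w, v ^ (a-1) * Real.exp (-v) * upperGamma b (w - v) =
      Real.Gamma b * lg a w - Bint a b * lg (a+b) w := by
  have hfint : IntervalIntegrable (fun v : ℝ => v ^ (a-1) * Real.exp (-v)) volume 0 w :=
    gamma_integrand_ii ha le_rfl hw
  have hm : Measurable (fun x : ℝ => lg b (max x 0)) :=
    Monotone.measurable (fun x y hxy => lg_mono hb (le_max_right _ _) (max_le_max hxy le_rfl))
  have hψmeas : Measurable (fun v : ℝ => v ^ (a-1) * Real.exp (-v) * lg b (max (w - v) 0)) :=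
    ((measurable_id.pow_const _).mul (measurable_id.neg.exp)).mul
      (hm.comp (measurable_const.sub measurable_id))
  have hae : (fun v : ℝ => v ^ (a-1) * Real.exp (-v) * lg b (max (w - v) 0))
      =ᵐ[volume.restrict (Ioc 0 w)]
      (fun v : ℝ => v ^ (a-1) * Real.exp (-v) * lg b (w - v)) := by
    refine (ae_restrict_iff' measurableSet_Ioc).mpr (ae_of_all _ fun v hv => ?_)
    simp only [max_eq_left (by linarith [hv.2] : (0:ℝ) ≤ w - v)]
  have hgint : IntegrableOn (fun v : ℝ => Real.Gamma b * (v ^ (a-1) * Real.exp (-v)))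
      (Ioc 0 w) volume :=
    (intervalIntegrable_iff_integrableOn_Ioc_of_le hw).mp (hfint.const_mul (Real.Gamma b))
  have hψint : IntegrableOn (fun v : ℝ => v ^ (a-1) * Real.exp (-v) * lg b (w - v))
      (Ioc 0 w) volume := by
    refine Integrable.mono hgint (hψmeas.aestronglyMeasurable.congr hae) ?_
    refine (ae_restrict_iff' measurableSet_Ioc).mpr (ae_of_all _ fun v hv => ?_)
    have hwv : (0:ℝ) ≤ w - v := by linarith [hv.2]
    have h1 : 0 ≤ v ^ (a-1) * Real.exp (-v) :=
      mul_nonneg (Real.rpow_nonneg hv.1.le _) (Real.exp_nonneg _)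
    rw [Real.norm_eq_abs, Real.norm_eq_abs, abs_of_nonneg (mul_nonneg h1 (lg_nonneg hwv)),
      abs_of_nonneg (mul_nonneg (Real.Gamma_pos_of_pos hb).le h1)]
    calc v ^ (a-1) * Real.exp (-v) * lg b (w - v)
        ≤ v ^ (a-1) * Real.exp (-v) * Real.Gamma b := by
          exact mul_le_mul_of_nonneg_left (lg_le_Gamma hb hwv) h1
      _ = Real.Gamma b * (v ^ (a-1) * Real.exp (-v)) := by ring
  have hII2 : IntervalIntegrable (fun v : ℝ => v ^ (a-1) * Real.exp (-v) * lg b (w - v))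
      volume 0 w := (intervalIntegrable_iff_integrableOn_Ioc_of_le hw).mpr hψint
  have hcongr : (∫ v in (0:ℝ)..w, v ^ (a-1) * Real.exp (-v) * upperGamma b (w - v)) =
      ∫ v in (0:ℝ)..w, (Real.Gamma b * (v ^ (a-1) * Real.exp (-v)) -
        v ^ (a-1) * Real.exp (-v) * lg b (w - v)) := by
    apply intervalIntegral.integral_congr
    intro v hv
    rw [uIcc_of_le hw] at hv
    have hwv : (0:ℝ) ≤ w - v := by linarith [hv.2]
    show v ^ (a-1) * Real.exp (-v) * upperGamma b (w - v) = _
    rw [upperGamma_eq hb hwv]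
    ring
  rw [hcongr, intervalIntegral.integral_sub (hfint.const_mul _) hII2,
    intervalIntegral.integral_const_mul, conv_eq ha hb hw]
  rfl

/-- evaluation of `I_k`. -/
theorem Ik_eval (α l xbar t : ℝ) (k : ℕ) (hα : 0 < α) (hk : 1 ≤ k) (hl : 0 < l)
    (hx : 0 ≤ xbar) (hxt : xbar ≤ t) :
    (∫ s in xbar..t,
        Real.exp (-l * s) * (s - xbar) ^ ((k : ℝ) * α - 1) * upperGamma α (l * (t - s))) =
      Real.Gamma ((k : ℝ) * α) * Real.Gamma α * Real.exp (-l * xbar) * l ^ (-((k : ℝ) * α)) *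
        (regGamma ((k : ℝ) * α) (l * (t - xbar)) -
          regGamma ((k : ℝ) * α + α) (l * (t - xbar))) := by
  set a : ℝ := (k : ℝ) * α with ha_def
  have hk1 : (1 : ℝ) ≤ (k : ℝ) := by exact_mod_cast hk
  have ha : 0 < a := mul_pos (by linarith) hα
  set xs : ℝ := t - xbar with hxs_def
  have hxs : 0 ≤ xs := by simp [hxs_def]; linarith
  set w : ℝ := l * xs with hw_def
  have hw : 0 ≤ w := mul_nonneg hl.le hxs
  set F : ℝ → ℝ := fun s =>
    Real.exp (-l * s) * (s - xbar) ^ (a - 1) * upperGamma α (l * (t - s)) with hF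
  have h1 : (∫ u in (0:ℝ)..xs, F (u + xbar)) = ∫ s in xbar..t, F s := by
    have := intervalIntegral.integral_comp_add_right (a := 0) (b := xs) F xbar
    rw [this, zero_add, hxs_def]
    norm_num
  rw [← h1]
  have h2 : (∫ u in (0:ℝ)..xs, F (u + xbar)) = Real.exp (-l * xbar) *
      ∫ u in (0:ℝ)..xs, Real.exp (-(l*u)) * u ^ (a - 1) * upperGamma α (l * (xs - u)) := by
    rw [← intervalIntegral.integral_const_mul]
    apply intervalIntegral.integral_congr
    intro u hu
    simp only [hF]
    have e1 : u + xbar - xbar = u := by ring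
    have e2 : t - (u + xbar) = xs - u := by rw [hxs_def]; ring
    have e3 : Real.exp (-l * (u + xbar)) = Real.exp (-l * xbar) * Real.exp (-(l*u)) := by
      rw [← Real.exp_add]; ring_nf
    rw [e1, e2, e3]
    ring
  rw [h2]
  set h : ℝ → ℝ := fun v => Real.exp (-v) * (v ^ (a-1) / l ^ (a-1)) * upperGamma α (w - v)
    with hh
  have h3 : (∫ u in (0:ℝ)..xs, Real.exp (-(l*u)) * u ^ (a - 1) * upperGamma α (l * (xs - u)))
      = ∫ u in (0:ℝ)..xs, h (l * u) := by
    apply intervalIntegral.integral_congr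
    intro u hu
    rw [uIcc_of_le hxs] at hu
    simp only [hh]
    have e1 : (l * u) ^ (a - 1) = l ^ (a-1) * u ^ (a-1) := Real.mul_rpow hl.le hu.1
    have e2 : w - l * u = l * (xs - u) := by rw [hw_def]; ring
    have hlp : (0:ℝ) < l ^ (a-1) := Real.rpow_pos_of_pos hl _
    rw [e1, e2]
    field_simp
  rw [h3, intervalIntegral.integral_comp_mul_left h hl.ne', mul_zero, ← hw_def]
  have h4 : (∫ v in (0:ℝ)..w, h v) =
      (1 / l ^ (a-1)) * ∫ v in (0:ℝ)..w, v ^ (a-1) * Real.exp (-v) * upperGamma α (w - v) := by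
    rw [← intervalIntegral.integral_const_mul]
    apply intervalIntegral.integral_congr
    intro v hv
    simp only [hh]
    ring
  rw [h4, J_eq ha hα hw]
  have hBint : Bint a α = Real.Gamma a * Real.Gamma α / Real.Gamma (a + α) := by
    have h := Gamma_mul_Gamma_real ha hα
    have hg : Real.Gamma (a + α) ≠ 0 := (Real.Gamma_pos_of_pos (by linarith)).ne'
    field_simp
    linarith [h]
  have hreg1 : regGamma a w = (1 / Real.Gamma a) * lg a w := rfl
  have hreg2 : regGamma (a + α) w = (1 / Real.Gamma (a + α)) * lg (a+α) w := rfl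
  have hlpow : l⁻¹ * (1 / l ^ (a-1)) = l ^ (-a) := by
    rw [show -a = -(a-1) + (-1) by ring, Real.rpow_add hl, Real.rpow_neg_one,
      Real.rpow_neg hl.le]
    ring
  rw [hBint, hreg1, hreg2, smul_eq_mul]
  have hga : Real.Gamma a ≠ 0 := (Real.Gamma_pos_of_pos ha).ne'
  have hgb : Real.Gamma (a + α) ≠ 0 := (Real.Gamma_pos_of_pos (by linarith)).ne'
  rw [← hlpow]
  field_simp
end

section
/- Consider the alternating renewal counting process N_t with i.i.d. inter-renewal times T_{n} − T_{n−1} that are Gamma(λ, α) distributed, and let N_t = Σ_{n≥1} 1_{T_n ≤ t}. Then E[(−1)^{N_t}] = 1 + 2 Σ_{k=1}^{∞} (−1)^k P(kα, λ t), where P is the regularized lower incomplete gamma function. -/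
open MeasureTheory ProbabilityTheory Real

/-- The `n`-th renewal time `T_n = X_1 + ... + X_n`. -/
noncomputable def renewalTime {Ω : Type*} (X : ℕ → Ω → ℝ) (n : ℕ) (ω : Ω) : ℝ :=
  ∑ i ∈ Finset.range n, X i ω

/-- The renewal counting process `N_t = Σ_{n ≥ 1} 1_{T_n ≤ t}`. -/
noncomputable def renewalCount {Ω : Type*} (X : ℕ → Ω → ℝ) (t : ℝ) (ω : Ω) : ℕ :=
  Set.ncard {n : ℕ | renewalTime X (n + 1) ω ≤ t}

open Set Filter
open scoped ENNReal Topology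

lemma betaKernel_intervalIntegrable {a b z : ℝ} (ha : 0 < a) (hb : 0 < b) (hz : 0 < z) :
    IntervalIntegrable (fun x => x ^ (a - 1) * (z - x) ^ (b - 1)) volume 0 z := by
  have half : ∀ {u v : ℝ}, 0 < u → 0 < v →
      IntervalIntegrable (fun x => x ^ (u - 1) * (z - x) ^ (v - 1)) volume 0 (z/2) := by
    intro u v hu hv
    refine (intervalIntegral.intervalIntegrable_rpow' (by linarith)).mul_continuousOn ?_
    refine ContinuousOn.rpow_const ((continuous_const.sub continuous_id).continuousOn) ?_
    intro x hx
    rw [uIcc_of_le (by linarith : (0:ℝ) ≤ z/2)] at hx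
    left
    intro h
    nlinarith [hx.1, hx.2]
  refine (half ha hb).trans ?_
  have h2 : IntervalIntegrable (fun x => x ^ (b - 1) * (z - x) ^ (a - 1)) volume 0 (z/2) :=
    half hb ha
  have h3 := h2.comp_sub_left z
  simp only [sub_sub_cancel] at h3
  have h4 : (fun x => (z - x) ^ (b - 1) * x ^ (a - 1)) =
      fun x => x ^ (a - 1) * (z - x) ^ (b - 1) := by funext x; ring
  rw [h4] at h3
  have : z - z/2 = z/2 := by ring
  rw [this, sub_zero] at h3
  exact h3.symm

lemma integral_betaKernel {a b z : ℝ} (ha : 0 < a) (hb : 0 < b) (hz : 0 < z) :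
    ∫ x in (0:ℝ)..z, x ^ (a - 1) * (z - x) ^ (b - 1)
      = z ^ (a + b - 1) * (Gamma a * Gamma b / Gamma (a + b)) := by
  have hGab : Gamma (a + b) ≠ 0 := (Real.Gamma_pos_of_pos (by linarith)).ne'
  have hB : Complex.betaIntegral a b = ((Gamma a * Gamma b / Gamma (a + b) : ℝ) : ℂ) := by
    have h := Complex.Gamma_mul_Gamma_eq_betaIntegral (s := (a:ℂ)) (t := (b:ℂ))
      (by simpa using ha) (by simpa using hb)
    rw [show ((a:ℂ) + b) = ((a + b : ℝ) : ℂ) by push_cast; ring] at h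
    rw [Complex.Gamma_ofReal, Complex.Gamma_ofReal, Complex.Gamma_ofReal] at h
    have hGab' : ((Gamma (a+b) : ℝ) : ℂ) ≠ 0 := by exact_mod_cast hGab
    rw [Complex.ofReal_div, Complex.ofReal_mul, h, mul_div_cancel_left₀ _ hGab']
  have key := Complex.betaIntegral_scaled (a:ℂ) (b:ℂ) hz
  have hL : (∫ x in (0:ℝ)..z, ((x:ℂ)) ^ ((a:ℂ) - 1) * ((z:ℂ) - x) ^ ((b:ℂ) - 1))
      = ((∫ x in (0:ℝ)..z, x ^ (a-1) * (z-x) ^ (b-1) : ℝ) : ℂ) := by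
    rw [← intervalIntegral.integral_ofReal]
    rw [intervalIntegral.integral_of_le hz.le, intervalIntegral.integral_of_le hz.le]
    refine setIntegral_congr_fun measurableSet_Ioc fun x hx => ?_
    rw [Complex.ofReal_mul, Complex.ofReal_cpow hx.1.le, Complex.ofReal_cpow (by linarith [hx.2]),
      Complex.ofReal_sub]
    push_cast
    ring
  rw [hL, hB] at key
  have hz' : ((z:ℂ)) ^ ((a:ℂ) + (b:ℂ) - 1) = ((z ^ (a + b - 1) : ℝ) : ℂ) := by
    rw [Complex.ofReal_cpow hz.le]
    push_cast
    ring_nf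
  rw [hz'] at key
  exact_mod_cast key

lemma map_add_withDensity {f g : ℝ → ℝ≥0∞} (hf : Measurable f) (hg : Measurable g) :
    Measure.map (fun p : ℝ × ℝ => p.1 + p.2)
      ((volume.withDensity f).prod (volume.withDensity g)) =
      volume.withDensity fun z => ∫⁻ x, f x * g (z - x) := by
  ext s hs
  rw [Measure.map_apply measurable_add hs, Measure.prod_apply (measurable_add hs),
    withDensity_apply _ hs]
  have h1 : ∀ x : ℝ, (volume.withDensity g) (Prod.mk x ⁻¹' ((fun p : ℝ × ℝ => p.1 + p.2) ⁻¹' s))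
      = ∫⁻ z, s.indicator 1 z * g (z - x) := by
    intro x
    have hpre : (Prod.mk x ⁻¹' ((fun p : ℝ × ℝ => p.1 + p.2) ⁻¹' s)) = (fun y => x + y) ⁻¹' s :=
      rfl
    have hms : MeasurableSet ((fun y => x + y) ⁻¹' s) := (measurable_const_add x) hs
    rw [hpre, withDensity_apply _ hms, ← lintegral_indicator hms g]
    have heq : ∀ y, ((fun y => x + y) ⁻¹' s).indicator g y
        = s.indicator 1 (x + y) * g y := by
      intro y
      by_cases hy : x + y ∈ s <;> simp [Set.indicator, hy]
    simp_rw [heq]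
    have := lintegral_add_left_eq_self (μ := (volume : Measure ℝ))
      (fun z => s.indicator 1 z * g (z - x)) x
    simp only [add_sub_cancel_left] at this
    exact this
  simp_rw [h1]
  have hinner : Measurable fun x => ∫⁻ z, s.indicator 1 z * g (z - x) := by
    apply Measurable.lintegral_prod_right (f := fun x z => s.indicator 1 z * g (z - x))
    exact ((measurable_one.indicator hs).comp measurable_snd).mul
      (hg.comp (measurable_snd.sub measurable_fst))
  rw [lintegral_withDensity_eq_lintegral_mul _ hf hinner]
  simp only [Pi.mul_apply]
  have h2 : ∀ x : ℝ, f x * ∫⁻ z, s.indicator 1 z * g (z - x)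
      = ∫⁻ z, s.indicator 1 z * (f x * g (z - x)) := by
    intro x
    have hmx : Measurable fun z : ℝ => s.indicator 1 z * g (z - x) := by
      have h1' : Measurable fun z : ℝ => g (z - x) := hg.comp (measurable_id.sub measurable_const)
      exact (measurable_one.indicator hs).mul h1'
    rw [← lintegral_const_mul _ hmx]
    exact lintegral_congr fun z => by ring
  simp_rw [h2]
  rw [lintegral_lintegral_swap (((measurable_one.indicator hs).comp measurable_snd).mul
    ((hf.comp measurable_fst).mul (hg.comp (measurable_snd.sub measurable_fst)))).aemeasurable]
  have h3 : ∀ z : ℝ, (∫⁻ x, s.indicator 1 z * (f x * g (z - x)))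
      = s.indicator (fun z => ∫⁻ x, f x * g (z - x)) z := by
    intro z
    have hmz : Measurable fun x : ℝ => f x * g (z - x) := by
      have h1' : Measurable fun x : ℝ => g (z - x) := hg.comp (measurable_const.sub measurable_id)
      exact hf.mul h1'
    rw [lintegral_const_mul _ hmz]
    by_cases hz : z ∈ s <;> simp [Set.indicator, hz]
  simp_rw [h3]
  rw [lintegral_indicator hs]

lemma gammaPDF_conv_ae {a b r : ℝ} (ha : 0 < a) (hb : 0 < b) (hr : 0 < r) :
    (fun z => ∫⁻ x, gammaPDF a r x * gammaPDF b r (z - x)) =ᵐ[volume] gammaPDF (a + b) r := by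
  have h0 : ∀ᵐ z : ℝ ∂(volume : Measure ℝ), z ≠ 0 := by
    rw [ae_iff]
    simpa using measure_singleton (0:ℝ)
  filter_upwards [h0] with z hz
  rcases hz.lt_or_gt with hneg | hpos
  · have hzero : ∀ x : ℝ, gammaPDF a r x * gammaPDF b r (z - x) = 0 := by
      intro x
      by_cases hx : 0 ≤ x
      · rw [gammaPDF_of_neg (by linarith : z - x < 0), mul_zero]
      · rw [gammaPDF_of_neg (lt_of_not_ge hx), zero_mul]
    simp only [hzero, lintegral_zero, gammaPDF_of_neg hneg]
  · -- positive case
    set C : ℝ := r ^ a * r ^ b / (Gamma a * Gamma b) * Real.exp (-(r * z)) with hC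
    have hGa := Real.Gamma_pos_of_pos ha
    have hGb := Real.Gamma_pos_of_pos hb
    have hGab := Real.Gamma_pos_of_pos (by linarith : 0 < a + b)
    have hCpos : 0 < C := by positivity
    -- step 1: restrict to Icc 0 z
    have hsupp : (fun x => gammaPDF a r x * gammaPDF b r (z - x))
        = (Icc 0 z).indicator (fun x => gammaPDF a r x * gammaPDF b r (z - x)) := by
      funext x
      rw [eq_comm, Set.indicator_apply_eq_self]
      intro hx
      rw [mem_Icc, not_and_or] at hx
      rcases hx with hx | hx
      · rw [gammaPDF_of_neg (lt_of_not_ge hx), zero_mul]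
      · rw [gammaPDF_of_neg (by push_neg at hx; linarith : z - x < 0), mul_zero]
    rw [hsupp, lintegral_indicator measurableSet_Icc,
      ← setLIntegral_congr (MeasureTheory.Ioo_ae_eq_Icc (α := ℝ) (a := 0) (b := z))]
    -- step 2: pointwise rewrite on Ioo
    have hptwise : ∀ x ∈ Ioo (0:ℝ) z, gammaPDF a r x * gammaPDF b r (z - x)
        = ENNReal.ofReal (C * (x ^ (a - 1) * (z - x) ^ (b - 1))) := by
      intro x hx
      rw [gammaPDF_of_nonneg hx.1.le, gammaPDF_of_nonneg (by linarith [hx.2] : (0:ℝ) ≤ z - x),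
        ← ENNReal.ofReal_mul (mul_nonneg (mul_nonneg (div_nonneg (Real.rpow_nonneg hr.le a)
          (Real.Gamma_pos_of_pos ha).le) (Real.rpow_nonneg hx.1.le _)) (Real.exp_nonneg _))]
      congr 1
      have hexp : Real.exp (-(r * x)) * Real.exp (-(r * (z - x))) = Real.exp (-(r * z)) := by
        rw [← Real.exp_add]; congr 1; ring
      calc r ^ a / Gamma a * x ^ (a - 1) * Real.exp (-(r * x)) *
            (r ^ b / Gamma b * (z - x) ^ (b - 1) * Real.exp (-(r * (z - x))))
          = (Real.exp (-(r * x)) * Real.exp (-(r * (z - x)))) *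
            (r ^ a * r ^ b / (Gamma a * Gamma b) * (x ^ (a - 1) * (z - x) ^ (b - 1))) := by
            field_simp
        _ = C * (x ^ (a - 1) * (z - x) ^ (b - 1)) := by rw [hexp, hC]; ring
    rw [setLIntegral_congr_fun measurableSet_Ioo hptwise]
    -- step 3: to real integral
    have hint : IntegrableOn (fun x => C * (x ^ (a - 1) * (z - x) ^ (b - 1))) (Ioo 0 z) := by
      have h := (intervalIntegrable_iff_integrableOn_Ioo_of_le hpos.le).mp
        (betaKernel_intervalIntegrable ha hb hpos)
      exact h.const_mul C
    have hnn : 0 ≤ᵐ[volume.restrict (Ioo 0 z)]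
        fun x => C * (x ^ (a - 1) * (z - x) ^ (b - 1)) := by
      refine (ae_restrict_iff' measurableSet_Ioo).mpr (ae_of_all _ fun x hx => ?_)
      have h1 : (0:ℝ) ≤ x := hx.1.le
      have h2 : (0:ℝ) ≤ z - x := by linarith [hx.2]
      positivity
    rw [← ofReal_integral_eq_lintegral_ofReal hint hnn]
    -- step 4: evaluate the real integral
    have hIoo : ∫ x in Ioo (0:ℝ) z, C * (x ^ (a - 1) * (z - x) ^ (b - 1))
        = C * (z ^ (a + b - 1) * (Gamma a * Gamma b / Gamma (a + b))) := by
      rw [setIntegral_congr_set (MeasureTheory.Ioo_ae_eq_Ioc (α := ℝ) (a := 0) (b := z)),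
        ← intervalIntegral.integral_of_le hpos.le, intervalIntegral.integral_const_mul,
        integral_betaKernel ha hb hpos]
    rw [hIoo, gammaPDF_of_nonneg hpos.le]
    congr 1
    have hrab : r ^ a * r ^ b = r ^ (a + b) := (Real.rpow_add hr a b).symm
    rw [hC]
    field_simp
    rw [← hrab]

lemma measurable_gammaPDF (a r : ℝ) : Measurable (gammaPDF a r) :=
  (measurable_gammaPDFReal a r).ennreal_ofReal

lemma map_add_gammaMeasure {a b r : ℝ} (ha : 0 < a) (hb : 0 < b) (hr : 0 < r) :
    Measure.map (fun p : ℝ × ℝ => p.1 + p.2) ((gammaMeasure a r).prod (gammaMeasure b r))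
      = gammaMeasure (a + b) r := by
  rw [gammaMeasure, gammaMeasure, gammaMeasure,
    map_add_withDensity (measurable_gammaPDF a r) (measurable_gammaPDF b r),
    withDensity_congr_ae (gammaPDF_conv_ae ha hb hr)]

lemma regGamma_eq_integral {a r : ℝ} (ha : 0 < a) (hr : 0 < r) {t : ℝ} (ht : 0 ≤ t) :
    regGamma a (r * t) = ∫ x in (0:ℝ)..t, r ^ a / Gamma a * x ^ (a - 1) * Real.exp (-(r * x)) := by
  have hGa := Real.Gamma_pos_of_pos ha
  have h := intervalIntegral.integral_comp_mul_left
    (fun s => s ^ (a - 1) * Real.exp (-s)) hr.ne' (a := 0) (b := t)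
  rw [mul_zero] at h
  beta_reduce at h
  have h2 : ∫ x in (0:ℝ)..(r*t), x ^ (a - 1) * Real.exp (-x)
      = r * ∫ x in (0:ℝ)..t, (r * x) ^ (a - 1) * Real.exp (-(r * x)) := by
    rw [h, smul_eq_mul, ← mul_assoc, mul_inv_cancel₀ hr.ne', one_mul]
  unfold regGamma
  rw [h2]
  rw [← intervalIntegral.integral_const_mul, ← intervalIntegral.integral_const_mul]
  rw [intervalIntegral.integral_of_le ht, intervalIntegral.integral_of_le ht]
  refine setIntegral_congr_fun measurableSet_Ioc fun x hx => ?_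
  have hxx : (0:ℝ) ≤ x := hx.1.le
  rw [Real.mul_rpow hr.le hxx]
  have hra : r * r ^ (a - 1) = r ^ a := by
    nth_rewrite 1 [← Real.rpow_one r]
    rw [← Real.rpow_add hr]
    norm_num
  field_simp
  rw [← hra]
  ring

lemma gammaMeasure_Iic {a r : ℝ} (ha : 0 < a) (hr : 0 < r) {t : ℝ} (ht : 0 ≤ t) :
    gammaMeasure a r (Set.Iic t) = ENNReal.ofReal (regGamma a (r * t)) := by
  have hGa := Real.Gamma_pos_of_pos ha
  rw [gammaMeasure, withDensity_apply _ measurableSet_Iic,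
    lintegral_Iic_eq_lintegral_Iio_add_Icc _ ht, lintegral_gammaPDF_of_nonpos le_rfl, zero_add,
    ← setLIntegral_congr (MeasureTheory.Ioc_ae_eq_Icc (α := ℝ) (a := 0) (b := t))]
  have hptwise : ∀ x ∈ Ioc (0:ℝ) t, gammaPDF a r x
      = ENNReal.ofReal (r ^ a / Gamma a * x ^ (a - 1) * Real.exp (-(r * x))) := by
    intro x hx
    exact gammaPDF_of_nonneg hx.1.le
  rw [setLIntegral_congr_fun measurableSet_Ioc hptwise]
  have hint : IntegrableOn (fun x => r ^ a / Gamma a * x ^ (a - 1) * Real.exp (-(r * x)))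
      (Ioc 0 t) := by
    have h1 : IntervalIntegrable
        (fun x => x ^ (a - 1) * (r ^ a / Gamma a * Real.exp (-(r * x)))) volume 0 t := by
      refine (intervalIntegral.intervalIntegrable_rpow' (by linarith)).mul_continuousOn ?_
      exact (continuous_const.mul ((continuous_const.mul continuous_id).neg.rexp)).continuousOn
    have h2 : (fun x => r ^ a / Gamma a * x ^ (a - 1) * Real.exp (-(r * x)))
        = fun x => x ^ (a - 1) * (r ^ a / Gamma a * Real.exp (-(r * x))) := by
      funext x; ring
    rw [h2]
    exact (intervalIntegrable_iff_integrableOn_Ioc_of_le ht).mp h1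
  have hnn : 0 ≤ᵐ[volume.restrict (Ioc 0 t)]
      fun x => r ^ a / Gamma a * x ^ (a - 1) * Real.exp (-(r * x)) := by
    refine (ae_restrict_iff' measurableSet_Ioc).mpr (ae_of_all _ fun x hx => ?_)
    exact mul_nonneg (mul_nonneg (div_nonneg (Real.rpow_nonneg hr.le a) hGa.le)
      (Real.rpow_nonneg hx.1.le _)) (Real.exp_nonneg _)
  rw [← ofReal_integral_eq_lintegral_ofReal hint hnn]
  congr 1
  rw [regGamma_eq_integral ha hr ht, intervalIntegral.integral_of_le ht]

lemma neg_one_pow_sum (N : ℕ) :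
    (1:ℝ) + 2 * ∑ k ∈ Finset.range N, (-1:ℝ)^(k+1) = (-1)^N := by
  induction N with
  | zero => simp
  | succ n ih =>
    rw [Finset.sum_range_succ, mul_add, ← add_assoc, add_assoc (1:ℝ) _ _]
    rw [pow_succ]
    nlinarith [ih]

lemma lower_set_eq_ncard {S : Set ℕ} (hfin : S.Finite)
    (hlow : ∀ ⦃m n : ℕ⦄, m ≤ n → n ∈ S → m ∈ S) : ∀ k, k ∈ S ↔ k < S.ncard := by
  rcases S.eq_empty_or_nonempty with hS | hS
  · simp [hS]
  · have hne : hfin.toFinset.Nonempty := by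
      rwa [Set.Finite.toFinset_nonempty]
    set M := hfin.toFinset.max' hne with hM
    have hMS : M ∈ S := by
      have := hfin.toFinset.max'_mem hne
      rwa [Set.Finite.mem_toFinset] at this
    have hSeq : S = Set.Iic M := by
      ext n
      constructor
      · intro hn
        exact hfin.toFinset.le_max' n (hfin.mem_toFinset.mpr hn)
      · intro hn
        exact hlow hn hMS
    have hncard : S.ncard = M + 1 := by
      rw [hSeq]
      rw [show Set.Iic M = ↑(Finset.Iic M) by ext; simp]
      rw [Set.ncard_coe_finset]
      simp [Nat.card_Iic]
    intro k
    rw [hncard, hSeq]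
    simp [Nat.lt_succ_iff]

lemma filter_range_min (n N : ℕ) :
    (Finset.range n).filter (fun k => k < N) = Finset.range (min n N) := by
  ext k
  simp [Nat.lt_min, and_comm]

lemma measurable_gammaPDF' (a r : ℝ) : Measurable (gammaPDF a r) :=
  (measurable_gammaPDFReal a r).ennreal_ofReal

lemma regGamma_nonneg {a r : ℝ} (ha : 0 < a) (hr : 0 < r) {t : ℝ} (ht : 0 ≤ t) :
    0 ≤ regGamma a (r * t) := by
  rw [regGamma_eq_integral ha hr ht]
  refine intervalIntegral.integral_nonneg ht fun u hu => ?_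
  exact mul_nonneg (mul_nonneg (div_nonneg (Real.rpow_nonneg hr.le a)
    (Real.Gamma_pos_of_pos ha).le) (Real.rpow_nonneg hu.1 _)) (Real.exp_nonneg _)

lemma gammaMeasure_Iic_zero {a r : ℝ} (ha : 0 < a) (hr : 0 < r) :
    gammaMeasure a r (Set.Iic 0) = 0 := by
  rw [gammaMeasure, withDensity_apply _ measurableSet_Iic,
    lintegral_Iic_eq_lintegral_Iio_add_Icc _ le_rfl, lintegral_gammaPDF_of_nonpos le_rfl,
    zero_add, Set.Icc_self]
  exact setLIntegral_measure_zero _ _ (measure_singleton 0)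

lemma gammaMeasure_Iic_lt_one {a r : ℝ} (ha : 0 < a) (hr : 0 < r) {t : ℝ} (ht : 0 ≤ t) :
    gammaMeasure a r (Set.Iic t) < 1 := by
  have hP : IsProbabilityMeasure (gammaMeasure a r) := isProbabilityMeasure_gammaMeasure ha hr
  have hcompl : gammaMeasure a r (Set.Iic t) + gammaMeasure a r (Set.Ioi t) = 1 := by
    rw [← Set.compl_Iic, measure_add_measure_compl measurableSet_Iic, measure_univ]
  have hpos : 0 < gammaMeasure a r (Set.Ioi t) := by
    rw [gammaMeasure, withDensity_apply _ measurableSet_Ioi,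
      lintegral_pos_iff_support (measurable_gammaPDF' a r),
      Measure.restrict_apply' measurableSet_Ioi]
    refine lt_of_lt_of_le ?_ (measure_mono (?_ : Set.Ioi t ⊆ _))
    · rw [Real.volume_Ioi]; exact ENNReal.zero_lt_top
    · intro x hx
      refine ⟨?_, hx⟩
      have hxpos : 0 < x := lt_of_le_of_lt ht hx
      have := gammaPDFReal_pos ha hr hxpos
      simp only [Function.mem_support, gammaPDF, ne_eq, ENNReal.ofReal_eq_zero, not_le]
      linarith
  calc gammaMeasure a r (Set.Iic t)
      < gammaMeasure a r (Set.Iic t) + gammaMeasure a r (Set.Ioi t) :=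
        ENNReal.lt_add_right (measure_ne_top _ _) hpos.ne'
    _ = 1 := hcompl

/-- for the renewal counting process with i.i.d. Gamma(λ, α) inter-renewal
times, `E[(-1)^{N_t}] = 1 + 2 Σ_{k=1}^∞ (-1)^k P(kα, λ t)`. -/
theorem parity_mean_gamma {Ω : Type*} [MeasurableSpace Ω]
    (prob : Measure Ω) [IsProbabilityMeasure prob]
    (l α : ℝ) (hl : 0 < l) (hα : 0 < α)
    (X : ℕ → Ω → ℝ) (hmeas : ∀ i, Measurable (X i))
    (hindep : iIndepFun X prob)
    (hlaw : ∀ i, Measure.map (X i) prob = gammaMeasure α l)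
    (t : ℝ) (ht : 0 ≤ t) :
    ∫ ω, ((-1 : ℝ)) ^ (renewalCount X t ω) ∂prob =
      1 + 2 * ∑' k : ℕ, (-1 : ℝ) ^ (k + 1) * regGamma (((k : ℝ) + 1) * α) (l * t) := by
  have hTmeas : ∀ n, Measurable (renewalTime X n) := by
    intro n
    unfold renewalTime
    exact Finset.measurable_sum _ fun i _ => hmeas i
  have hTsum : ∀ n : ℕ, renewalTime X n = ∑ j ∈ Finset.range n, X j := by
    intro n
    funext ω
    rw [Finset.sum_apply]
    rfl
  -- law of renewal times
  have hlawT : ∀ n : ℕ, Measure.map (renewalTime X (n+1)) prob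
      = gammaMeasure (((n:ℝ)+1) * α) l := by
    intro n
    induction n with
    | zero =>
      have h1 : renewalTime X 1 = X 0 := by
        funext ω; simp [renewalTime]
      rw [h1, hlaw 0]
      norm_num
    | succ n ih =>
      have hI : IndepFun (renewalTime X (n+1)) (X (n+1)) prob := by
        rw [hTsum (n+1)]
        exact hindep.indepFun_sum_range_succ hmeas (n+1)
      have hmap : Measure.map (fun ω => (renewalTime X (n+1) ω, X (n+1) ω)) prob
          = (Measure.map (renewalTime X (n+1)) prob).prod (Measure.map (X (n+1)) prob) :=
        (indepFun_iff_map_prod_eq_prod_map_map (hTmeas (n+1)).aemeasurable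
          (hmeas (n+1)).aemeasurable).mp hI
      have hsum : renewalTime X (n+2) = fun ω => renewalTime X (n+1) ω + X (n+1) ω := by
        funext ω; simp [renewalTime, Finset.sum_range_succ]
      have hcomp : (fun ω => renewalTime X (n+1) ω + X (n+1) ω)
          = (fun p : ℝ × ℝ => p.1 + p.2) ∘ (fun ω => (renewalTime X (n+1) ω, X (n+1) ω)) := rfl
      rw [hsum, hcomp, ← Measure.map_map measurable_add ((hTmeas (n+1)).prodMk (hmeas (n+1))),
        hmap, ih, hlaw (n+1), map_add_gammaMeasure (by positivity) hα hl]
      congr 1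
      push_cast
      ring
  -- probability of renewal events
  have hprobA : ∀ n : ℕ, prob {ω | renewalTime X (n+1) ω ≤ t}
      = ENNReal.ofReal (regGamma (((n:ℝ)+1) * α) (l*t)) := by
    intro n
    have hset : {ω | renewalTime X (n+1) ω ≤ t} = renewalTime X (n+1) ⁻¹' (Set.Iic t) := rfl
    rw [hset, ← Measure.map_apply (hTmeas (n+1)) measurableSet_Iic, hlawT n,
      gammaMeasure_Iic (by positivity) hl ht]
  set c := regGamma α (l*t) with hcdef
  have hc0 : 0 ≤ c := regGamma_nonneg hα hl ht
  have hc1 : c < 1 := by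
    have h := gammaMeasure_Iic_lt_one hα hl ht
    rw [gammaMeasure_Iic hα hl ht] at h
    exact ENNReal.ofReal_lt_one.mp h
  -- rg nonneg
  have hrg0 : ∀ n : ℕ, 0 ≤ regGamma (((n:ℝ)+1) * α) (l*t) := fun n =>
    regGamma_nonneg (by positivity) hl ht
  -- a.e. positivity of the X i
  have hXpos : ∀ᵐ ω ∂prob, ∀ i, 0 < X i ω := by
    rw [ae_all_iff]
    intro i
    rw [ae_iff]
    have hset : {ω | ¬ 0 < X i ω} = X i ⁻¹' (Set.Iic 0) := by
      ext ω; simp [not_lt]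
    rw [hset, ← Measure.map_apply (hmeas i) measurableSet_Iic, hlaw i,
      gammaMeasure_Iic_zero hα hl]
  -- geometric bound
  have hgeom : ∀ n : ℕ, regGamma (((n:ℝ)+1) * α) (l*t) ≤ c^(n+1) := by
    intro n
    induction n with
    | zero => simp [hcdef]
    | succ n ih =>
      have hI : IndepFun (renewalTime X (n+1)) (X (n+1)) prob := by
        rw [hTsum (n+1)]
        exact hindep.indepFun_sum_range_succ hmeas (n+1)
      have hsub : prob {ω | renewalTime X (n+2) ω ≤ t}
          ≤ prob ((renewalTime X (n+1) ⁻¹' Set.Iic t) ∩ (X (n+1) ⁻¹' Set.Iic t)) := by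
        refine measure_mono_ae ?_
        filter_upwards [hXpos] with ω hω hmem
        have hTpos : 0 ≤ renewalTime X (n+1) ω :=
          Finset.sum_nonneg fun i _ => (hω i).le
        have hrec : renewalTime X (n+2) ω = renewalTime X (n+1) ω + X (n+1) ω := by
          simp [renewalTime, Finset.sum_range_succ]
        have hXnn : 0 ≤ X (n+1) ω := (hω (n+1)).le
        have hmem' : renewalTime X (n+2) ω ≤ t := hmem
        rw [hrec] at hmem'
        constructor
        · simp only [Set.mem_preimage, Set.mem_Iic]; linarith
        · simp only [Set.mem_preimage, Set.mem_Iic]; linarith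
      rw [(indepFun_iff_measure_inter_preimage_eq_mul.mp hI) (Set.Iic t) (Set.Iic t)
        measurableSet_Iic measurableSet_Iic] at hsub
      have hXle : prob (X (n+1) ⁻¹' Set.Iic t) = ENNReal.ofReal c := by
        rw [← Measure.map_apply (hmeas (n+1)) measurableSet_Iic, hlaw (n+1),
          gammaMeasure_Iic hα hl ht]
      have hTle : prob (renewalTime X (n+1) ⁻¹' Set.Iic t)
          = ENNReal.ofReal (regGamma (((n:ℝ)+1) * α) (l*t)) := hprobA n
      rw [hprobA (n+1), hTle, hXle, ← ENNReal.ofReal_mul (hrg0 n)] at hsub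
      have hreal := (ENNReal.ofReal_le_ofReal_iff (mul_nonneg (hrg0 n) hc0)).mp hsub
      refine hreal.trans ?_
      rw [pow_succ]
      exact mul_le_mul_of_nonneg_right ih hc0
  -- a.e. finiteness
  have hfinAE : ∀ᵐ ω ∂prob, ∃ n : ℕ, ¬ renewalTime X (n+1) ω ≤ t := by
    have hE : prob (⋂ n : ℕ, {ω | renewalTime X (n+1) ω ≤ t}) = 0 := by
      have hle : ∀ n : ℕ, prob (⋂ m : ℕ, {ω | renewalTime X (m+1) ω ≤ t})
          ≤ ENNReal.ofReal (c^(n+1)) := by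
        intro n
        refine (measure_mono (Set.iInter_subset _ n)).trans ?_
        rw [hprobA n]
        exact ENNReal.ofReal_le_ofReal (hgeom n)
      have htend : Tendsto (fun n : ℕ => ENNReal.ofReal (c^(n+1))) atTop (𝓝 0) := by
        rw [show (0:ℝ≥0∞) = ENNReal.ofReal 0 by simp]
        exact (ENNReal.continuous_ofReal.tendsto 0).comp
          ((tendsto_pow_atTop_nhds_zero_of_lt_one hc0 hc1).comp (tendsto_add_atTop_nat 1))
      exact le_antisymm (ge_of_tendsto' htend hle) zero_le
    have hae : ∀ᵐ ω ∂prob, ω ∉ ⋂ n : ℕ, {ω | renewalTime X (n+1) ω ≤ t} := by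
      rw [ae_iff]
      refine measure_mono_null ?_ hE
      intro ω hω
      simpa using hω
    filter_upwards [hae] with ω hω
    simpa [Set.mem_iInter] using hω
  -- the approximating functions
  set A : ℕ → Set Ω := fun k => {ω | renewalTime X (k+1) ω ≤ t} with hAdef
  have hAmeas : ∀ k, MeasurableSet (A k) := fun k =>
    measurableSet_le (hTmeas (k+1)) measurable_const
  set F : ℕ → Ω → ℝ := fun n ω =>
    1 + 2 * ∑ k ∈ Finset.range n, (A k).indicator (fun _ => (-1:ℝ)^(k+1)) ω with hFdef
  -- pointwise description on the good set
  have hpt : ∀ᵐ ω ∂prob, ∀ n : ℕ, F n ω = (-1:ℝ)^(min n (renewalCount X t ω)) := by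
    filter_upwards [hXpos, hfinAE] with ω hω hfin'
    intro n
    set S : Set ℕ := {k | renewalTime X (k+1) ω ≤ t} with hSdef
    have hmono : ∀ p q : ℕ, p ≤ q → renewalTime X p ω ≤ renewalTime X q ω := by
      intro p q hpq
      exact Finset.sum_le_sum_of_subset_of_nonneg (Finset.range_subset_range.mpr hpq)
        fun i _ _ => (hω i).le
    have hlow : ∀ ⦃p q : ℕ⦄, p ≤ q → q ∈ S → p ∈ S := by
      intro p q hpq hq
      exact le_trans (hmono (p+1) (q+1) (by omega)) hq
    have hfin : S.Finite := by
      obtain ⟨m, hm⟩ := hfin'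
      refine (Set.finite_Iio m).subset ?_
      intro k hk
      by_contra hkm
      rw [Set.mem_Iio, not_lt] at hkm
      exact hm (hlow hkm hk)
    have hiff := lower_set_eq_ncard hfin hlow
    have hN : renewalCount X t ω = S.ncard := rfl
    rw [hFdef, hN]
    have hterm : ∀ k, (A k).indicator (fun _ => (-1:ℝ)^(k+1)) ω
        = if k < S.ncard then (-1:ℝ)^(k+1) else 0 := by
      intro k
      rw [Set.indicator_apply]
      congr 1
      simp only [hAdef, Set.mem_setOf_eq, eq_iff_iff]
      exact hiff k
    simp only [hterm]
    rw [← Finset.sum_filter, filter_range_min]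
    exact neg_one_pow_sum (min n S.ncard)
  -- measurability and bound
  have hFmeas : ∀ n, AEStronglyMeasurable (F n) prob := by
    intro n
    have hsum : Measurable fun ω => ∑ k ∈ Finset.range n,
        (A k).indicator (fun _ => (-1:ℝ)^(k+1)) ω :=
      Finset.measurable_sum _ fun k _ => measurable_const.indicator (hAmeas k)
    exact (measurable_const.add (hsum.const_mul 2)).aestronglyMeasurable
  have hbound : ∀ n, ∀ᵐ ω ∂prob, ‖F n ω‖ ≤ (1:ℝ) := by
    intro n
    filter_upwards [hpt] with ω hω
    rw [hω n]
    simp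
  have hconv : ∀ᵐ ω ∂prob, Tendsto (fun n => F n ω) atTop
      (𝓝 ((-1:ℝ)^(renewalCount X t ω))) := by
    filter_upwards [hpt] with ω hω
    refine tendsto_atTop_of_eventually_const (i₀ := renewalCount X t ω) fun n hn => ?_
    rw [hω n, min_eq_right hn]
  have key := tendsto_integral_of_dominated_convergence (fun _ => (1:ℝ)) hFmeas
    (integrable_const 1) hbound hconv
  -- the integrals of F n
  have hint : ∀ n, ∫ ω, F n ω ∂prob
      = 1 + 2 * ∑ k ∈ Finset.range n, (-1:ℝ)^(k+1) * regGamma (((k:ℝ)+1) * α) (l*t) := by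
    intro n
    have hgint : ∀ k, Integrable ((A k).indicator fun _ => (-1:ℝ)^(k+1)) prob := fun k =>
      (integrable_const _).indicator (hAmeas k)
    rw [hFdef]
    rw [integral_add (integrable_const 1)
      ((integrable_finset_sum _ fun k _ => hgint k).const_mul 2)]
    rw [integral_const, integral_const_mul, integral_finset_sum _ fun k _ => hgint k]
    have hterm2 : ∀ k, ∫ ω, (A k).indicator (fun _ => (-1:ℝ)^(k+1)) ω ∂prob
        = (-1:ℝ)^(k+1) * regGamma (((k:ℝ)+1) * α) (l*t) := by
      intro k
      rw [integral_indicator_const _ (hAmeas k), measureReal_def, hprobA k,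
        ENNReal.toReal_ofReal (hrg0 k), smul_eq_mul, mul_comm]
    simp only [hterm2]
    simp
  -- summability
  have hsummable : Summable fun k : ℕ => (-1:ℝ)^(k+1) * regGamma (((k:ℝ)+1) * α) (l*t) := by
    refine Summable.of_abs ?_
    refine Summable.of_nonneg_of_le (fun k => abs_nonneg _) (fun k => ?_)
      ((summable_geometric_of_lt_one hc0 hc1).mul_right c)
    rw [abs_mul, abs_pow, abs_neg, abs_one, one_pow, one_mul,
      abs_of_nonneg (hrg0 k)]
    calc regGamma (((k:ℝ)+1) * α) (l*t) ≤ c^(k+1) := hgeom k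
      _ = c^k * c := pow_succ c k
  have hlim2 : Tendsto (fun n => ∫ ω, F n ω ∂prob) atTop
      (𝓝 (1 + 2 * ∑' k : ℕ, (-1:ℝ)^(k+1) * regGamma (((k:ℝ)+1) * α) (l*t))) := by
    simp only [hint]
    exact tendsto_const_nhds.add ((hsummable.hasSum.tendsto_sum_nat).const_mul 2)
  exact tendsto_nhds_unique key hlim2
end
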